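/- Let X, Y, H be Hermitian n×n complex matrices with XY = YX, and let λ = (x, y, E) ∈ ℝ³. Let L be the 2n×2n Hermitian block matrix L = [[H − E·I, (X − iY) − (x − iy)I], [(X + iY) − (x + iy)I, −(H − E·I)]] (the spectral localizer with Pauli matrices σ_x, σ_y, σ_z as the Clifford representation), and let Q = (X − xI)² + (Y − yI)² + (H − EI)². Then |σ_min(Q) − (σ_min(L))²| ≤ ‖[H, X + iY]‖, where σ_min denotes the smallest singular value and ‖·‖ the operator norm. -/

import Mathlib

open Matrix Complex

/-- The smallest singular value of a matrix: the infimum over unit vectors `v`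
of `‖Av‖` (ℓ² norms). -/
noncomputable def sigmaMin {m p : Type*} [Fintype m] [Fintype p] [DecidableEq p]
    (A : Matrix m p ℂ) : ℝ :=
  ⨅ v : {v : EuclideanSpace ℂ p // ‖v‖ = 1}, ‖(Matrix.toEuclideanLin A) v.1‖

/-- The ℓ²-induced operator norm of a square matrix. -/
noncomputable def opNorm {m : Type*} [Fintype m] [DecidableEq m] (A : Matrix m m ℂ) : ℝ :=
  ‖Matrix.toEuclideanCLM (𝕜 := ℂ) A‖

namespace QvCAux

open scoped InnerProductSpace

set_option linter.unusedSectionVars false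

section Abstract

variable {E : Type*} [NormedAddCommGroup E] [InnerProductSpace ℂ E] [FiniteDimensional ℂ E]

noncomputable def sMin (T : E →L[ℂ] E) : ℝ :=
  ⨅ v : {v : E // ‖v‖ = 1}, ‖T v.1‖

noncomputable def qMin (T : E →L[ℂ] E) : ℝ :=
  ⨅ v : {v : E // ‖v‖ = 1}, RCLike.re ⟪T v.1, v.1⟫_ℂ

lemma bddBelow_sMin (T : E →L[ℂ] E) :
    BddBelow (Set.range fun v : {v : E // ‖v‖ = 1} => ‖T v.1‖) :=
  ⟨0, by rintro r ⟨v, rfl⟩; positivity⟩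

lemma re_inner_le (T : E →L[ℂ] E) (v : E) (hv : ‖v‖ = 1) :
    RCLike.re ⟪T v, v⟫_ℂ ≤ ‖T v‖ := by
  calc RCLike.re ⟪T v, v⟫_ℂ ≤ ‖(⟪T v, v⟫_ℂ)‖ := RCLike.re_le_norm _
    _ ≤ ‖T v‖ * ‖v‖ := norm_inner_le_norm _ _
    _ = ‖T v‖ := by rw [hv, mul_one]

lemma re_inner_ge (T : E →L[ℂ] E) (v : E) (hv : ‖v‖ = 1) :
    -‖T‖ ≤ RCLike.re ⟪T v, v⟫_ℂ := by
  have h1 : ‖(⟪T v, v⟫_ℂ)‖ ≤ ‖T‖ := by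
    calc ‖(⟪T v, v⟫_ℂ)‖ ≤ ‖T v‖ * ‖v‖ := norm_inner_le_norm _ _
      _ ≤ (‖T‖ * ‖v‖) * ‖v‖ := by
          gcongr; exact T.le_opNorm v
      _ = ‖T‖ := by rw [hv]; ring
  have := RCLike.norm_re_le_norm (⟪T v, v⟫_ℂ)
  have := abs_le.mp (this.trans h1)
  linarith [this.1]

lemma bddBelow_qMin (T : E →L[ℂ] E) :
    BddBelow (Set.range fun v : {v : E // ‖v‖ = 1} => RCLike.re ⟪T v.1, v.1⟫_ℂ) :=
  ⟨-‖T‖, by rintro r ⟨v, rfl⟩; exact re_inner_ge T v.1 v.2⟩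

lemma qMin_le (T : E →L[ℂ] E) {v : E} (hv : ‖v‖ = 1) :
    qMin T ≤ RCLike.re ⟪T v, v⟫_ℂ :=
  ciInf_le (bddBelow_qMin T) ⟨v, hv⟩

lemma sMin_le (T : E →L[ℂ] E) {v : E} (hv : ‖v‖ = 1) :
    sMin T ≤ ‖T v‖ :=
  ciInf_le (bddBelow_sMin T) ⟨v, hv⟩

lemma ciInf_sq {ι : Type*} [Nonempty ι] (f : ι → ℝ) (hf : ∀ i, 0 ≤ f i) :
    (⨅ i, f i) ^ 2 = ⨅ i, (f i) ^ 2 := by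
  have hbb : BddBelow (Set.range f) := ⟨0, by rintro r ⟨i, rfl⟩; exact hf i⟩
  have hbb2 : BddBelow (Set.range fun i => (f i) ^ 2) :=
    ⟨0, by rintro r ⟨i, rfl⟩; positivity⟩
  have h0 : 0 ≤ ⨅ i, f i := le_ciInf hf
  have h02 : 0 ≤ ⨅ i, (f i) ^ 2 := le_ciInf fun i => by positivity
  apply le_antisymm
  · exact le_ciInf fun i => by
      have := ciInf_le hbb i
      exact pow_le_pow_left₀ h0 this 2
  · have hs : Real.sqrt (⨅ i, (f i) ^ 2) ≤ ⨅ i, f i := by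
      apply le_ciInf fun i => ?_
      have : Real.sqrt ((f i) ^ 2) = f i := Real.sqrt_sq (hf i)
      calc Real.sqrt (⨅ i, (f i) ^ 2) ≤ Real.sqrt ((f i) ^ 2) :=
            Real.sqrt_le_sqrt (ciInf_le hbb2 i)
        _ = f i := this
    calc (⨅ i, (f i) ^ 2) = Real.sqrt (⨅ i, (f i) ^ 2) ^ 2 := (Real.sq_sqrt h02).symm
      _ ≤ (⨅ i, f i) ^ 2 := pow_le_pow_left₀ (Real.sqrt_nonneg _) hs 2

lemma sMin_sq (T : E →L[ℂ] E) (hT : IsSelfAdjoint T) :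
    sMin T ^ 2 = qMin (T * T) := by
  rcases isEmpty_or_nonempty {v : E // ‖v‖ = 1} with h | h
  · simp [sMin, qMin, Real.iInf_of_isEmpty]
  · rw [sMin, ciInf_sq _ (fun v => norm_nonneg _)]
    unfold qMin
    congr 1
    funext v
    have : ⟪(T * T) v.1, v.1⟫_ℂ = ⟪T v.1, T v.1⟫_ℂ := by
      rw [ContinuousLinearMap.mul_apply, ← hT.adjoint_eq,
        ContinuousLinearMap.adjoint_inner_left, hT.adjoint_eq]
    rw [this, inner_self_eq_norm_sq]

lemma sMin_eq_qMin [Nontrivial E] (T : E →L[ℂ] E) (hT : IsSelfAdjoint T)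
    (hpos : ∀ v : E, 0 ≤ RCLike.re ⟪T v, v⟫_ℂ) :
    sMin T = qMin T := by
  obtain ⟨z, hz⟩ : ∃ z : E, z ≠ 0 := exists_ne 0
  have hnu : Nonempty {v : E // ‖v‖ = 1} := by
    refine ⟨⟨‖z‖⁻¹ • z, ?_⟩⟩
    rw [norm_smul, norm_inv, norm_norm, inv_mul_cancel₀ (norm_ne_zero_iff.mpr hz)]
  have hnz : Nonempty {x : E // x ≠ 0} := ⟨⟨z, hz⟩⟩
  set μ : ℝ := ⨅ x : {x : E // x ≠ 0}, RCLike.re ⟪(T : E →ₗ[ℂ] E) x.1, x.1⟫_ℂ / ‖x.1‖ ^ 2 with hμ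
  have hbbr : BddBelow (Set.range fun x : {x : E // x ≠ 0} =>
      RCLike.re ⟪(T : E →ₗ[ℂ] E) x.1, x.1⟫_ℂ / ‖x.1‖ ^ 2) :=
    ⟨0, by rintro r ⟨x, rfl⟩; exact div_nonneg (hpos x.1) (by positivity)⟩
  have hμ0 : 0 ≤ μ := le_ciInf fun x => div_nonneg (hpos x.1) (by positivity)
  have hsym : (T : E →ₗ[ℂ] E).IsSymmetric := hT.isSymmetric
  have hev : Module.End.HasEigenvalue (T : E →ₗ[ℂ] E) (μ : ℂ) :=
    hsym.hasEigenvalue_iInf_of_finiteDimensional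
  obtain ⟨u, hu⟩ := hev.exists_hasEigenvector
  have hu0 : u ≠ 0 := hu.2
  have hTu : T u = (μ : ℂ) • u := hu.apply_eq_smul
  set w : E := ((‖u‖ : ℂ))⁻¹ • u with hw
  have hwn : ‖w‖ = 1 := by
    rw [hw, norm_smul, norm_inv, Complex.norm_real, norm_norm,
      inv_mul_cancel₀ (norm_ne_zero_iff.mpr hu0)]
  have hTw : T w = (μ : ℂ) • w := by
    rw [hw, _root_.map_smul, hTu, smul_comm]
  apply le_antisymm
  · have h1 : sMin T ≤ μ := by
      have : ‖T w‖ = μ := by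
        rw [hTw, norm_smul, hwn, mul_one, Complex.norm_real, Real.norm_eq_abs,
          _root_.abs_of_nonneg hμ0]
      exact (sMin_le T hwn).trans_eq this
    have h2 : μ ≤ qMin T := by
      apply le_ciInf fun v => ?_
      have hv0 : v.1 ≠ 0 := by
        intro h
        have := v.2
        rw [h, norm_zero] at this
        norm_num at this
      have : RCLike.re ⟪(T : E →ₗ[ℂ] E) v.1, v.1⟫_ℂ / ‖v.1‖ ^ 2
          = RCLike.re ⟪T v.1, v.1⟫_ℂ := by
        rw [v.2, one_pow, div_one]; rfl
      calc μ ≤ RCLike.re ⟪(T : E →ₗ[ℂ] E) v.1, v.1⟫_ℂ / ‖v.1‖ ^ 2 :=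
            ciInf_le hbbr ⟨v.1, hv0⟩
        _ = _ := this
    exact h1.trans h2
  · exact le_ciInf fun v => (qMin_le T v.2).trans (re_inner_le T v.1 v.2)

lemma qMin_mul_norm_sq_le [Nontrivial E] (T : E →L[ℂ] E)
    (hpos : ∀ v : E, 0 ≤ RCLike.re ⟪T v, v⟫_ℂ) (v : E) :
    qMin T * ‖v‖ ^ 2 ≤ RCLike.re ⟪T v, v⟫_ℂ := by
  rcases eq_or_ne v 0 with rfl | hv
  · simp
  · have hnv : (0:ℝ) < ‖v‖ := norm_pos_iff.mpr hv
    set u : E := ‖v‖⁻¹ • v with hu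
    have hun : ‖u‖ = 1 := by
      rw [hu, norm_smul, norm_inv, norm_norm, inv_mul_cancel₀ hnv.ne']
    have hq := qMin_le T hun
    have hre : RCLike.re ⟪T u, u⟫_ℂ = ‖v‖⁻¹ * (‖v‖⁻¹ * RCLike.re ⟪T v, v⟫_ℂ) := by
      rw [hu, T.map_smul_of_tower, RCLike.real_smul_eq_coe_smul (K := ℂ),
        RCLike.real_smul_eq_coe_smul (K := ℂ), inner_smul_left, inner_smul_right,
        RCLike.conj_ofReal, ← mul_assoc, ← RCLike.ofReal_mul, RCLike.re_ofReal_mul]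
      ring
    rw [hre] at hq
    have h2 := mul_le_mul_of_nonneg_right hq (le_of_lt (by positivity : (0:ℝ) < ‖v‖ ^ 2))
    calc qMin T * ‖v‖ ^ 2 ≤ (‖v‖⁻¹ * (‖v‖⁻¹ * RCLike.re ⟪T v, v⟫_ℂ)) * ‖v‖ ^ 2 := h2
      _ = RCLike.re ⟪T v, v⟫_ℂ := by
            rw [pow_two]
            field_simp

end Abstract

section Blocks

variable {m : Type*} [Fintype m] [DecidableEq m]

noncomputable def blkl (w : EuclideanSpace ℂ (m ⊕ m)) : EuclideanSpace ℂ m :=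
  (WithLp.equiv 2 _).symm fun i => w (Sum.inl i)

noncomputable def blkr (w : EuclideanSpace ℂ (m ⊕ m)) : EuclideanSpace ℂ m :=
  (WithLp.equiv 2 _).symm fun i => w (Sum.inr i)

@[simp] lemma blkl_apply (w : EuclideanSpace ℂ (m ⊕ m)) (i : m) :
    blkl w i = w (Sum.inl i) := rfl

@[simp] lemma blkr_apply (w : EuclideanSpace ℂ (m ⊕ m)) (i : m) :
    blkr w i = w (Sum.inr i) := rfl

lemma toECLM_coord (M : Matrix m m ℂ) (x : EuclideanSpace ℂ m) (j : m) :
    (Matrix.toEuclideanCLM (𝕜 := ℂ) M x) j = (M *ᵥ x) j := rfl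

lemma inner_eq_sum (x y : EuclideanSpace ℂ m) :
    ⟪x, y⟫_ℂ = ∑ i, (starRingEnd ℂ) (x i) * y i := by
  simp [PiLp.inner_apply, RCLike.inner_apply]
  exact Finset.sum_congr rfl fun _ _ => mul_comm _ _

lemma inner_fromBlocks (A B C D : Matrix m m ℂ) (w : EuclideanSpace ℂ (m ⊕ m)) :
    ⟪Matrix.toEuclideanCLM (𝕜 := ℂ) (Matrix.fromBlocks A B C D) w, w⟫_ℂ =
      ⟪Matrix.toEuclideanCLM (𝕜 := ℂ) A (blkl w), blkl w⟫_ℂ +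
      ⟪Matrix.toEuclideanCLM (𝕜 := ℂ) B (blkr w), blkl w⟫_ℂ +
      ⟪Matrix.toEuclideanCLM (𝕜 := ℂ) C (blkl w), blkr w⟫_ℂ +
      ⟪Matrix.toEuclideanCLM (𝕜 := ℂ) D (blkr w), blkr w⟫_ℂ := by
  simp only [inner_eq_sum, toECLM_coord, blkl_apply, blkr_apply]
  rw [Fintype.sum_sum_type]
  simp only [Matrix.mulVec, dotProduct, Fintype.sum_sum_type,
    Matrix.fromBlocks_apply₁₁, Matrix.fromBlocks_apply₁₂, Matrix.fromBlocks_apply₂₁,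
    Matrix.fromBlocks_apply₂₂, map_add, add_mul, Finset.sum_add_distrib, blkl_apply, blkr_apply]
  ring

lemma norm_sq_sum (w : EuclideanSpace ℂ (m ⊕ m)) :
    ‖w‖ ^ 2 = ‖blkl w‖ ^ 2 + ‖blkr w‖ ^ 2 := by
  simp only [EuclideanSpace.norm_eq, blkl_apply, blkr_apply]
  rw [Real.sq_sqrt (by positivity), Real.sq_sqrt (by positivity),
    Real.sq_sqrt (by positivity), Fintype.sum_sum_type]

lemma isSelfAdjoint_toECLM {M : Matrix m m ℂ} (hM : M.IsHermitian) :
    IsSelfAdjoint (Matrix.toEuclideanCLM (𝕜 := ℂ) M) := by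
  rw [_root_.IsSelfAdjoint, ← map_star]
  exact congrArg _ hM

lemma abs_re_inner_le (T : EuclideanSpace ℂ m →L[ℂ] EuclideanSpace ℂ m)
    (u w : EuclideanSpace ℂ m) :
    |RCLike.re ⟪T u, w⟫_ℂ| ≤ ‖T‖ * ‖u‖ * ‖w‖ := by
  calc |RCLike.re ⟪T u, w⟫_ℂ| ≤ ‖(⟪T u, w⟫_ℂ)‖ := RCLike.abs_re_le_norm _
    _ ≤ ‖T u‖ * ‖w‖ := norm_inner_le_norm _ _
    _ ≤ ‖T‖ * ‖u‖ * ‖w‖ := by gcongr; exact T.le_opNorm u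

lemma re_inner_mul_self (T : EuclideanSpace ℂ m →L[ℂ] EuclideanSpace ℂ m)
    (hT : IsSelfAdjoint T) (v : EuclideanSpace ℂ m) :
    RCLike.re ⟪(T * T) v, v⟫_ℂ = ‖T v‖ ^ 2 := by
  have : ⟪(T * T) v, v⟫_ℂ = ⟪T v, T v⟫_ℂ := by
    rw [ContinuousLinearMap.mul_apply, ← hT.adjoint_eq,
      ContinuousLinearMap.adjoint_inner_left, hT.adjoint_eq]
  rw [this, inner_self_eq_norm_sq]

end Blocks

end QvCAux

open QvCAux
open scoped InnerProductSpace

set_option maxHeartbeats 2000000 in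
set_option synthInstance.maxHeartbeats 400000 in
/-- with `L` the spectral localizer of `(X, Y, H)` at `(x, y, E)`
(written in block form using the Pauli matrices) and
`Q = (X−x)² + (Y−y)² + (H−E)²`, one has `|σ_min(Q) − σ_min(L)²| ≤ ‖[H, X+iY]‖`. -/
theorem quadratic_vs_clifford_gap_2d {n : ℕ}
    (X Y H : Matrix (Fin n) (Fin n) ℂ)
    (hX : X.IsHermitian) (hY : Y.IsHermitian) (hH : H.IsHermitian)
    (hXY : X * Y = Y * X) (x y E : ℝ) :
    |sigmaMin ((X - (x : ℂ) • 1) ^ 2 + (Y - (y : ℂ) • 1) ^ 2 + (H - (E : ℂ) • 1) ^ 2) -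
        (sigmaMin
          (Matrix.fromBlocks
            (H - (E : ℂ) • 1)
            ((X - I • Y) - ((x : ℂ) - I * y) • 1)
            ((X + I • Y) - ((x : ℂ) + I * y) • 1)
            (-(H - (E : ℂ) • 1)))) ^ 2| ≤
      opNorm (H * (X + I • Y) - (X + I • Y) * H) := by
  rcases Nat.eq_zero_or_pos n with rfl | hn
  · -- degenerate case
    haveI h1 : IsEmpty {v : EuclideanSpace ℂ (Fin 0) // ‖v‖ = 1} := by
      refine ⟨fun v => ?_⟩
      have h0 : v.1 = 0 := by
        ext i
        exact i.elim0
      have := v.2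
      rw [h0, norm_zero] at this
      norm_num at this
    haveI h2 : IsEmpty {v : EuclideanSpace ℂ (Fin 0 ⊕ Fin 0) // ‖v‖ = 1} := by
      refine ⟨fun v => ?_⟩
      have h0 : v.1 = 0 := by
        ext i
        rcases i with i | i <;> exact i.elim0
      have := v.2
      rw [h0, norm_zero] at this
      norm_num at this
    unfold sigmaMin opNorm
    rw [Real.iInf_of_isEmpty, Real.iInf_of_isEmpty]
    refine le_trans (le_of_eq (by norm_num)) (norm_nonneg _)
  · -- main case
    obtain ⟨i0⟩ : Nonempty (Fin n) := ⟨⟨0, hn⟩⟩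
    -- abbreviations
    set C : Matrix (Fin n) (Fin n) ℂ := H - (E : ℂ) • 1 with hC
    set M₁ : Matrix (Fin n) (Fin n) ℂ := (X - I • Y) - ((x : ℂ) - I * y) • 1 with hM₁
    set M₂ : Matrix (Fin n) (Fin n) ℂ := (X + I • Y) - ((x : ℂ) + I * y) • 1 with hM₂
    set Qm : Matrix (Fin n) (Fin n) ℂ :=
      (X - (x : ℂ) • 1) ^ 2 + (Y - (y : ℂ) • 1) ^ 2 + (H - (E : ℂ) • 1) ^ 2 with hQm
    set K : Matrix (Fin n) (Fin n) ℂ := H * (X + I • Y) - (X + I • Y) * H with hK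
    set Lm : Matrix (Fin n ⊕ Fin n) (Fin n ⊕ Fin n) ℂ := Matrix.fromBlocks C M₁ M₂ (-C) with hLm
    -- the four block identities
    have e1 : C * C + M₁ * M₂ = Qm := by
      rw [hC, hM₁, hM₂, hQm]
      simp only [mul_add, add_mul, mul_sub, sub_mul, smul_mul_assoc, mul_smul_comm,
        smul_smul, mul_one, one_mul, pow_two, smul_sub, smul_add, hXY]
      match_scalars
      all_goals try ring_nf
      all_goals try simp only [Complex.I_sq]
      all_goals try ring_nf
    have e2 : C * M₁ + M₁ * (-C) = -(Kᴴ) := by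
      rw [hC, hM₁, hK]
      simp only [conjTranspose_sub, conjTranspose_mul, conjTranspose_add,
        Matrix.conjTranspose_smul, conjTranspose_one, hX.eq, hY.eq, hH.eq,
        Complex.star_def, Complex.conj_I]
      simp only [mul_add, add_mul, mul_sub, sub_mul, smul_mul_assoc, mul_smul_comm,
        smul_smul, mul_one, one_mul, pow_two, smul_sub, smul_add, neg_mul, mul_neg,
        neg_smul, smul_neg, neg_sub, neg_neg, neg_add]
      match_scalars
      all_goals try ring_nf
      all_goals try simp only [Complex.I_sq]
      all_goals try ring_nf
    have e3 : M₂ * C + (-C) * M₂ = -K := by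
      rw [hC, hM₂, hK]
      simp only [mul_add, add_mul, mul_sub, sub_mul, smul_mul_assoc, mul_smul_comm,
        smul_smul, mul_one, one_mul, pow_two, smul_sub, smul_add, neg_mul, mul_neg,
        neg_smul, smul_neg, neg_sub, neg_neg, neg_add]
      match_scalars
      all_goals try ring_nf
      all_goals try simp only [Complex.I_sq]
      all_goals try ring_nf
    have e4 : M₂ * M₁ + (-C) * (-C) = Qm := by
      rw [hC, hM₁, hM₂, hQm]
      simp only [mul_add, add_mul, mul_sub, sub_mul, smul_mul_assoc, mul_smul_comm,
        smul_smul, mul_one, one_mul, pow_two, smul_sub, smul_add, neg_mul, mul_neg,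
        neg_smul, smul_neg, neg_sub, neg_neg, neg_add, hXY]
      match_scalars
      all_goals try ring_nf
      all_goals try simp only [Complex.I_sq]
      all_goals try ring_nf
    have hLL : Lm * Lm = Matrix.fromBlocks Qm (-(Kᴴ)) (-K) Qm := by
      rw [hLm, Matrix.fromBlocks_multiply, e1, e2, e3, e4]
    -- Hermitian facts
    have hA : (X - (x : ℂ) • 1).IsHermitian := by
      show _ᴴ = _
      simp [Matrix.conjTranspose_sub, Matrix.conjTranspose_smul, hX.eq,
        Complex.star_def, Complex.conj_ofReal]
    have hB : (Y - (y : ℂ) • 1).IsHermitian := by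
      show _ᴴ = _
      simp [Matrix.conjTranspose_sub, Matrix.conjTranspose_smul, hY.eq,
        Complex.star_def, Complex.conj_ofReal]
    have hCh : C.IsHermitian := by
      show _ᴴ = _
      rw [hC]
      simp [Matrix.conjTranspose_sub, Matrix.conjTranspose_smul, hH.eq,
        Complex.star_def, Complex.conj_ofReal]
    have hQH : Qm.IsHermitian := by
      show _ᴴ = _
      rw [hQm]
      simp [pow_two, Matrix.conjTranspose_add, Matrix.conjTranspose_mul,
        Matrix.conjTranspose_sub, Matrix.conjTranspose_smul, Matrix.conjTranspose_one,
        hX.eq, hY.eq, hH.eq, Complex.star_def, Complex.conj_ofReal]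
    have hM₁₂ : M₁ᴴ = M₂ := by
      rw [hM₁, hM₂]
      simp only [Matrix.conjTranspose_sub, Matrix.conjTranspose_smul, Matrix.conjTranspose_add,
        Matrix.conjTranspose_one, hX.eq, hY.eq, Complex.star_def, Complex.conj_I,
        Complex.conj_ofReal, _root_.map_sub, _root_.map_mul, neg_smul, neg_mul,
        sub_neg_eq_add, neg_neg]
    have hLH : Lm.IsHermitian := by
      show _ᴴ = _
      rw [hLm, Matrix.fromBlocks_conjTranspose]
      rw [hCh.eq, Matrix.conjTranspose_neg, hCh.eq]
      rw [hM₁₂]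
      have : M₂ᴴ = M₁ := by rw [← hM₁₂, conjTranspose_conjTranspose]
      rw [this]
    -- CLM level
    set sQ := Matrix.toEuclideanCLM (𝕜 := ℂ) Qm with hsQ
    set sL := Matrix.toEuclideanCLM (𝕜 := ℂ) Lm with hsL
    set sK := Matrix.toEuclideanCLM (𝕜 := ℂ) K with hsK
    have hsaQ : IsSelfAdjoint sQ := isSelfAdjoint_toECLM hQH
    have hsaL : IsSelfAdjoint sL := isSelfAdjoint_toECLM hLH
    -- positivity of the quadratic form of Q
    have hpos : ∀ v : EuclideanSpace ℂ (Fin n), 0 ≤ RCLike.re ⟪sQ v, v⟫_ℂ := by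
      intro v
      have hdecomp : sQ =
          Matrix.toEuclideanCLM (𝕜 := ℂ) (X - (x : ℂ) • 1) *
            Matrix.toEuclideanCLM (𝕜 := ℂ) (X - (x : ℂ) • 1) +
          Matrix.toEuclideanCLM (𝕜 := ℂ) (Y - (y : ℂ) • 1) *
            Matrix.toEuclideanCLM (𝕜 := ℂ) (Y - (y : ℂ) • 1) +
          Matrix.toEuclideanCLM (𝕜 := ℂ) (H - (E : ℂ) • 1) *
            Matrix.toEuclideanCLM (𝕜 := ℂ) (H - (E : ℂ) • 1) := by
        rw [hsQ, hQm]
        simp only [pow_two, map_add, _root_.map_mul]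
      rw [hdecomp]
      simp only [ContinuousLinearMap.add_apply, inner_add_left, map_add]
      rw [re_inner_mul_self _ (isSelfAdjoint_toECLM hA),
        re_inner_mul_self _ (isSelfAdjoint_toECLM hB),
        re_inner_mul_self _ (isSelfAdjoint_toECLM hCh)]
      positivity
    -- nontriviality / nonemptiness
    have hsingle : ‖EuclideanSpace.single i0 (1:ℂ)‖ = 1 := by
      simp [EuclideanSpace.norm_single]
    haveI : Nontrivial (EuclideanSpace ℂ (Fin n)) := by
      refine nontrivial_of_ne (EuclideanSpace.single i0 (1:ℂ)) 0 fun h => ?_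
      rw [h, norm_zero] at hsingle
      norm_num at hsingle
    have hne1 : Nonempty {v : EuclideanSpace ℂ (Fin n) // ‖v‖ = 1} :=
      ⟨⟨EuclideanSpace.single i0 (1:ℂ), hsingle⟩⟩
    have hsingle2 : ‖EuclideanSpace.single (Sum.inl i0 : Fin n ⊕ Fin n) (1:ℂ)‖ = 1 := by
      simp [EuclideanSpace.norm_single]
    have hne2 : Nonempty {w : EuclideanSpace ℂ (Fin n ⊕ Fin n) // ‖w‖ = 1} :=
      ⟨⟨EuclideanSpace.single (Sum.inl i0) (1:ℂ), hsingle2⟩⟩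
    -- norms of the off-diagonal blocks
    have hKadj : ‖Matrix.toEuclideanCLM (𝕜 := ℂ) (-(Kᴴ))‖ = ‖sK‖ := by
      have : Matrix.toEuclideanCLM (𝕜 := ℂ) (-(Kᴴ)) = -(star sK) := by
        rw [map_neg, hsK, ← map_star]
        rfl
      rw [this, norm_neg]
      have h2 : star sK = ContinuousLinearMap.adjoint sK := rfl
      rw [h2]
      exact ContinuousLinearMap.adjoint.norm_map sK
    have hKneg : ‖Matrix.toEuclideanCLM (𝕜 := ℂ) (-K)‖ = ‖sK‖ := by
      rw [map_neg, norm_neg]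
    -- upper bound : qMin (sL * sL) ≤ qMin sQ
    have hub : qMin (sL * sL) ≤ qMin sQ := by
      apply le_ciInf fun v => ?_
      set w : EuclideanSpace ℂ (Fin n ⊕ Fin n) :=
        (WithLp.equiv 2 _).symm (Sum.elim ((WithLp.equiv 2 _) v.1) 0) with hw
      have hwl : blkl w = v.1 := rfl
      have hwr : blkr w = 0 := rfl
      have hwn : ‖w‖ = 1 := by
        have h2 : ‖w‖ ^ 2 = 1 := by
          rw [norm_sq_sum w, hwl, hwr, v.2, norm_zero]
          norm_num
        rw [← Real.sqrt_sq (norm_nonneg w), h2, Real.sqrt_one]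
      have key : RCLike.re ⟪(sL * sL) w, w⟫_ℂ = RCLike.re ⟪sQ v.1, v.1⟫_ℂ := by
        rw [hsL, ← _root_.map_mul, hLL, inner_fromBlocks, hwl, hwr]
        simp [inner_zero_left, inner_zero_right]
        rfl
      calc qMin (sL * sL) ≤ RCLike.re ⟪(sL * sL) w, w⟫_ℂ := qMin_le _ hwn
        _ = _ := key
    -- lower bound : qMin sQ - ‖sK‖ ≤ qMin (sL * sL)
    have hlb : qMin sQ - ‖sK‖ ≤ qMin (sL * sL) := by
      apply le_ciInf fun w => ?_
      have hsum : ‖blkl w.1‖ ^ 2 + ‖blkr w.1‖ ^ 2 = 1 := by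
        rw [← norm_sq_sum, w.2]; norm_num
      have key : RCLike.re ⟪(sL * sL) w.1, w.1⟫_ℂ =
          RCLike.re ⟪sQ (blkl w.1), blkl w.1⟫_ℂ +
          RCLike.re ⟪sQ (blkr w.1), blkr w.1⟫_ℂ +
          RCLike.re ⟪Matrix.toEuclideanCLM (𝕜 := ℂ) (-(Kᴴ)) (blkr w.1), blkl w.1⟫_ℂ +
          RCLike.re ⟪Matrix.toEuclideanCLM (𝕜 := ℂ) (-K) (blkl w.1), blkr w.1⟫_ℂ := by
        rw [hsL, ← _root_.map_mul, hLL, inner_fromBlocks]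
        simp only [map_add, ← hsQ]
        ring
      have c1 : |RCLike.re ⟪Matrix.toEuclideanCLM (𝕜 := ℂ) (-(Kᴴ)) (blkr w.1), blkl w.1⟫_ℂ|
          ≤ ‖sK‖ * ‖blkr w.1‖ * ‖blkl w.1‖ := by
        have := abs_re_inner_le (Matrix.toEuclideanCLM (𝕜 := ℂ) (-(Kᴴ))) (blkr w.1) (blkl w.1)
        rwa [hKadj] at this
      have c2 : |RCLike.re ⟪Matrix.toEuclideanCLM (𝕜 := ℂ) (-K) (blkl w.1), blkr w.1⟫_ℂ|
          ≤ ‖sK‖ * ‖blkl w.1‖ * ‖blkr w.1‖ := by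
        have := abs_re_inner_le (Matrix.toEuclideanCLM (𝕜 := ℂ) (-K)) (blkl w.1) (blkr w.1)
        rwa [hKneg] at this
      have q1 := qMin_mul_norm_sq_le sQ hpos (blkl w.1)
      have q2 := qMin_mul_norm_sq_le sQ hpos (blkr w.1)
      have hab : 2 * ‖blkl w.1‖ * ‖blkr w.1‖ ≤ ‖blkl w.1‖ ^ 2 + ‖blkr w.1‖ ^ 2 :=
        two_mul_le_add_sq _ _
      have hKnn : (0:ℝ) ≤ ‖sK‖ := norm_nonneg _
      rw [key]
      have a1 := abs_le.mp c1
      have a2 := abs_le.mp c2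
      have e : qMin sQ * ‖blkl w.1‖ ^ 2 + qMin sQ * ‖blkr w.1‖ ^ 2 = qMin sQ := by
        rw [← mul_add, hsum, mul_one]
      have f : ‖sK‖ * (2 * ‖blkl w.1‖ * ‖blkr w.1‖) ≤ ‖sK‖ * 1 :=
        mul_le_mul_of_nonneg_left (hab.trans hsum.le) hKnn
      nlinarith [a1.1, a2.1, q1, q2, e, f,
        mul_nonneg (norm_nonneg (blkl w.1)) (norm_nonneg (blkr w.1))]
    -- tie it together
    have hsQeq : sigmaMin Qm = qMin sQ := by
      have : sigmaMin Qm = sMin sQ := rfl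
      rw [this, sMin_eq_qMin sQ hsaQ hpos]
    have hsLeq : sigmaMin Lm ^ 2 = qMin (sL * sL) := by
      have : sigmaMin Lm = sMin sL := rfl
      rw [this, sMin_sq sL hsaL]
    have hKeq : opNorm K = ‖sK‖ := rfl
    rw [hsQeq, hsLeq, hKeq, abs_sub_le_iff]
    constructor <;> linarith
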